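/- Let M be a finitely generated free ℤ-module and K a subset of M. Then the intersection of the ℤ-span of K with the union over m ≥ 1 of (1/m)·(m∗K) equals the intersection of the ℤ-span of K with the real convex hull of K in M ⊗ ℝ. Here m∗K = { x₁ + ⋯ + x_m : x_i ∈ K }. -/

import Mathlib

open TensorProduct

/-- The `m`-fold sum `m ∗ K = { x₁ + ⋯ + x_m : xᵢ ∈ K }`. -/
def foldSum {M : Type*} [AddCommMonoid M] (m : ℕ) (K : Set M) : Set M :=
  { x | ∃ f : Fin m → M, (∀ i, f i ∈ K) ∧ x = ∑ i, f i }

lemma rat_span_of_real {ι : Type*} [Fintype ι] [DecidableEq ι] {k : ℕ} (w : Fin k → ι → ℚ) (c : ι → ℚ)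
    (t : Fin k → ℝ) (ht : ∀ j : ι, ∑ i, t i * (w i j : ℝ) = (c j : ℝ)) :
    ∃ q : Fin k → ℚ, ∀ j, ∑ i, q i * w i j = c j := by
  have hc : c ∈ Submodule.span ℚ (Set.range w) := by
    by_contra hc
    set W := Submodule.span ℚ (Set.range w) with hW
    have h0 : W.mkQ c ≠ 0 := by
      simpa [Submodule.mkQ_apply, Submodule.Quotient.mk_eq_zero] using hc
    have hex : ¬ ∀ φ : Module.Dual ℚ ((ι → ℚ) ⧸ W), φ (W.mkQ c) = 0 := by
      rw [Module.forall_dual_apply_eq_zero_iff]; exact h0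
    obtain ⟨φ, hφ⟩ := not_forall.1 hex
    set ψ := φ.comp W.mkQ with hψ
    have hψw : ∀ i, ψ (w i) = 0 := by
      intro i
      have : W.mkQ (w i) = 0 := by
        simp [Submodule.mkQ_apply, Submodule.Quotient.mk_eq_zero]
        exact Submodule.subset_span ⟨i, rfl⟩
      simp [hψ, this]
    have hrep : ∀ v : ι → ℚ, ψ v = ∑ j, v j * ψ (fun j' => if j = j' then 1 else 0) := by
      intro v
      simpa [smul_eq_mul] using LinearMap.pi_apply_eq_sum_univ ψ v
    set r : ι → ℚ := fun j => ψ (fun j' => if j = j' then 1 else 0) with hr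
    have key : ((ψ c : ℚ) : ℝ) = 0 := by
      have hzero : ∀ i, ∑ j, (w i j : ℝ) * (r j : ℝ) = 0 := by
        intro i
        have hq : ∑ j, w i j * r j = (0:ℚ) := by rw [← hrep (w i)]; exact hψw i
        exact_mod_cast hq
      calc ((ψ c : ℚ) : ℝ) = ∑ j, (c j : ℝ) * (r j : ℝ) := by
            rw [hrep c]; push_cast; rfl
        _ = ∑ j, (∑ i, t i * (w i j : ℝ)) * (r j : ℝ) := by
            refine Finset.sum_congr rfl fun j _ => ?_; rw [ht j]
        _ = ∑ i, t i * ∑ j, (w i j : ℝ) * (r j : ℝ) := by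
            simp_rw [Finset.sum_mul, Finset.mul_sum]
            rw [Finset.sum_comm]
            exact Finset.sum_congr rfl fun j _ => Finset.sum_congr rfl fun i _ => by ring
        _ = 0 := by simp [hzero]
    exact hφ (by exact_mod_cast key)
  rw [Submodule.mem_span_range_iff_exists_fun] at hc
  obtain ⟨q, hq⟩ := hc
  refine ⟨q, fun j => ?_⟩
  have := congrFun hq j
  simpa [Finset.sum_apply] using this

lemma rat_nonneg_of_real {ι : Type*} [Fintype ι] [DecidableEq ι] :
    ∀ (k : ℕ) (w : Fin k → ι → ℚ) (c : ι → ℚ) (t : Fin k → ℝ),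
      (∀ i, 0 ≤ t i) → (∀ j, ∑ i, t i * (w i j : ℝ) = (c j : ℝ)) →
      ∃ q : Fin k → ℚ, (∀ i, 0 ≤ q i) ∧ ∀ j, ∑ i, q i * w i j = c j := by
  intro k
  induction k using Nat.strong_induction_on with
  | _ k IH =>
  intro w c t ht0 ht
  by_cases hli : LinearIndependent ℝ (fun i : Fin k => fun j : ι => (w i j : ℝ))
  · obtain ⟨q, hq⟩ := rat_span_of_real w c t ht
    have hsol : ∀ j, ∑ i, (q i : ℝ) * (w i j : ℝ) = (c j : ℝ) := by
      intro j; exact_mod_cast congrArg (fun a : ℚ => (a : ℝ)) (hq j)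
    have heq : ∀ i, t i - (q i : ℝ) = 0 := by
      apply Fintype.linearIndependent_iff.1 hli
      funext j
      simp only [Finset.sum_apply, Pi.smul_apply, smul_eq_mul, Pi.zero_apply]
      simp only [sub_mul, Finset.sum_sub_distrib, ht j, hsol j, sub_self]
    refine ⟨q, fun i => ?_, hq⟩
    have := ht0 i
    rw [sub_eq_zero.1 (heq i)] at this
    exact_mod_cast this
  · rw [Fintype.not_linearIndependent_iff] at hli
    obtain ⟨g0, hg0sum, i₁, hgi₁⟩ := hli
    have hvec : ∀ (g : Fin k → ℝ), (∑ i, g i • (fun j : ι => (w i j : ℝ))) = 0 →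
        ∀ j, ∑ i, g i * (w i j : ℝ) = 0 := by
      intro g h j
      simpa [Finset.sum_apply] using congrFun h j
    obtain ⟨g, hgj, i₁, hi₁⟩ : ∃ g : Fin k → ℝ, (∀ j, ∑ i, g i * (w i j : ℝ) = 0) ∧
        ∃ i, 0 < g i := by
      rcases hgi₁.lt_or_gt with h | h
      · refine ⟨-g0, fun j => ?_, ⟨i₁, by simpa using h⟩⟩
        have := hvec g0 hg0sum j
        simp only [Pi.neg_apply, neg_mul, Finset.sum_neg_distrib, this, neg_zero]
      · exact ⟨g0, hvec g0 hg0sum, ⟨i₁, h⟩⟩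
    have hPne : (Finset.univ.filter (fun i => 0 < g i)).Nonempty :=
      ⟨i₁, by simp [hi₁]⟩
    obtain ⟨i₀, hi₀P, hmin⟩ := Finset.exists_min_image _ (fun i => t i / g i) hPne
    have hgi₀ : 0 < g i₀ := (Finset.mem_filter.1 hi₀P).2
    set s := t i₀ / g i₀ with hs
    have hs0 : 0 ≤ s := div_nonneg (ht0 i₀) hgi₀.le
    set t' := fun i => t i - s * g i with ht'def
    have ht'0 : ∀ i, 0 ≤ t' i := by
      intro i
      by_cases hgi : 0 < g i
      · have h1 : s ≤ t i / g i := hmin i (Finset.mem_filter.2 ⟨Finset.mem_univ _, hgi⟩)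
        have h2 : s * g i ≤ (t i / g i) * g i := mul_le_mul_of_nonneg_right h1 hgi.le
        rw [div_mul_cancel₀ _ hgi.ne'] at h2
        simpa [ht'def] using h2
      · have : s * g i ≤ 0 := mul_nonpos_of_nonneg_of_nonpos hs0 (not_lt.1 hgi)
        have := sub_nonneg.2 (this.trans (ht0 i))
        simp only [ht'def]
        nlinarith [ht0 i]
    have ht'i₀ : t' i₀ = 0 := by
      simp [ht'def, hs, div_mul_cancel₀ _ hgi₀.ne']
    have ht' : ∀ j, ∑ i, t' i * (w i j : ℝ) = (c j : ℝ) := by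
      intro j
      simp only [ht'def, sub_mul, Finset.sum_sub_distrib, ht j]
      have : ∑ i, s * g i * (w i j : ℝ) = s * ∑ i, g i * (w i j : ℝ) := by
        rw [Finset.mul_sum]; exact Finset.sum_congr rfl fun i _ => by ring
      rw [this, hgj j, mul_zero, sub_zero]
    rcases k with _ | k'
    · exact Fin.elim0 i₁
    obtain ⟨q₂, hq₂0, hq₂⟩ := IH k' (Nat.lt_succ_self _) (fun i => w (i₀.succAbove i)) c
      (fun i => t' (i₀.succAbove i)) (fun i => ht'0 _) (by
        intro j
        have := ht' j
        rw [Fin.sum_univ_succAbove _ i₀, ht'i₀] at this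
        simpa using this)
    refine ⟨i₀.insertNth 0 q₂, ?_, ?_⟩
    · intro i
      refine Fin.succAboveCases i₀ ?_ ?_ i
      · simp
      · intro j; simpa using hq₂0 j
    · intro j
      rw [Fin.sum_univ_succAbove _ i₀]
      simp [hq₂ j]

lemma foldSum_add {M : Type*} [AddCommMonoid M] {K : Set M} {p q : ℕ} {a b : M}
    (ha : a ∈ foldSum p K) (hb : b ∈ foldSum q K) : a + b ∈ foldSum (p + q) K := by
  obtain ⟨f, hf, rfl⟩ := ha
  obtain ⟨g, hg, rfl⟩ := hb
  refine ⟨Fin.append f g, fun i => ?_, ?_⟩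
  · exact Fin.addCases (fun i => by simpa [Fin.append_left] using hf i)
      (fun i => by simpa [Fin.append_right] using hg i) i
  · rw [Fin.sum_univ_add]
    simp [Fin.append_left, Fin.append_right]

lemma nsmul_mem_foldSum {M : Type*} [AddCommMonoid M] {K : Set M} {y : M} (hy : y ∈ K) (n : ℕ) :
    n • y ∈ foldSum n K :=
  ⟨fun _ => y, fun _ => hy, by simp [Finset.sum_const, Finset.card_univ]⟩

lemma sum_nsmul_mem_foldSum {M : Type*} [AddCommMonoid M] {K : Set M} :
    ∀ {k : ℕ} (n : Fin k → ℕ) (y : Fin k → M), (∀ i, y i ∈ K) →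
      (∑ i, n i • y i) ∈ foldSum (∑ i, n i) K := by
  intro k
  induction k with
  | zero => exact fun n y _ => by simpa using ⟨fun i => i.elim0, fun i => i.elim0, by simp⟩
  | succ k IH =>
    intro n y hy
    rw [Fin.sum_univ_succ (f := fun i => n i • y i), Fin.sum_univ_succ (f := n)]
    exact foldSum_add (nsmul_mem_foldSum (hy 0) (n 0)) (IH (fun i => n i.succ) (fun i => y i.succ) fun i => hy _)

lemma forward_aux (M : Type*) [AddCommGroup M]
    [Module.Free ℤ M] [Module.Finite ℤ M] (K : Set M) (x : M) (m : ℕ) (hm : 0 < m)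
    (hfs : m • x ∈ foldSum m K) :
    ((1 : ℝ) ⊗ₜ[ℤ] x : ℝ ⊗[ℤ] M) ∈
      convexHull ℝ ((fun y : M => ((1 : ℝ) ⊗ₜ[ℤ] y : ℝ ⊗[ℤ] M)) '' K) := by
  obtain ⟨f, hfK, hfsum⟩ := hfs
  set φ : M →ₗ[ℤ] ℝ ⊗[ℤ] M := TensorProduct.mk ℤ ℝ M 1 with hφ
  have hm' : (m : ℝ) ≠ 0 := Nat.cast_ne_zero.2 hm.ne'
  have h1 : (m : ℝ) • ((1:ℝ) ⊗ₜ[ℤ] x : ℝ ⊗[ℤ] M) = ∑ i, ((1:ℝ) ⊗ₜ[ℤ] f i : ℝ ⊗[ℤ] M) := by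
    have h := congrArg φ hfsum
    rw [map_nsmul, map_sum] at h
    rw [Nat.cast_smul_eq_nsmul ℝ]; exact h
  refine mem_convexHull_of_exists_fintype (fun _ : Fin m => (m : ℝ)⁻¹)
    (fun i => (1:ℝ) ⊗ₜ[ℤ] f i) (fun _ => by positivity) ?_ (fun i => ⟨f i, hfK i, rfl⟩) ?_
  · simp [Finset.sum_const, Finset.card_univ]
    rw [mul_inv_cancel₀ hm']
  · rw [← Finset.smul_sum, ← h1, inv_smul_smul₀ hm']

lemma backward_aux (M : Type*) [AddCommGroup M]
    [Module.Free ℤ M] [Module.Finite ℤ M] (K : Set M) (x : M)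
    (hhull : ((1 : ℝ) ⊗ₜ[ℤ] x : ℝ ⊗[ℤ] M) ∈
      convexHull ℝ ((fun y : M => ((1 : ℝ) ⊗ₜ[ℤ] y : ℝ ⊗[ℤ] M)) '' K)) :
    ∃ m : ℕ, 0 < m ∧ m • x ∈ foldSum m K := by
  classical
  rw [mem_convexHull_iff_exists_fintype] at hhull
  obtain ⟨ι', _, wt, z, hw0, hw1, hzs, hzx⟩ := hhull
  set k := Fintype.card ι' with hk
  set e : Fin k ≃ ι' := (Fintype.equivFin ι').symm with he
  have hz : ∀ i : ι', ∃ y, y ∈ K ∧ (1:ℝ) ⊗ₜ[ℤ] y = z i := by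
    intro i
    rcases hzs i with ⟨y, hy, hyz⟩
    exact ⟨y, hy, hyz⟩
  choose y hyK hyz using hz
  set ι := Module.Free.ChooseBasisIndex ℤ M with hι
  set b := Module.Free.chooseBasis ℤ M with hb
  set B := b.baseChange ℝ with hB
  have hrepr : ∀ (v : M) (j : ι), B.repr ((1:ℝ) ⊗ₜ[ℤ] v) j = ((b.repr v j : ℤ) : ℝ) := by
    intro v j
    rw [hB, Module.Basis.baseChange_repr_tmul]
    simp [zsmul_eq_mul]
  -- real coordinate equations
  have hcoordR : ∀ j : ι, ∑ i : Fin k, wt (e i) * ((b.repr (y (e i)) j : ℤ) : ℝ)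
      = ((b.repr x j : ℤ) : ℝ) := by
    intro j
    have h := congrArg (fun v : ℝ ⊗[ℤ] M => B.repr v j) hzx
    simp only [map_sum] at h
    rw [Finsupp.coe_finset_sum, Finset.sum_apply] at h
    have h2 : ∑ i : ι', wt i * ((b.repr (y i) j : ℤ) : ℝ) = ((b.repr x j : ℤ) : ℝ) := by
      rw [← hrepr x j, ← h]
      refine Finset.sum_congr rfl fun i _ => ?_
      rw [map_smul, Finsupp.smul_apply, smul_eq_mul, ← hyz i, hrepr]
    rw [← h2]
    exact Fintype.sum_equiv e _ _ fun i => rfl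
  have hw1' : ∑ i : Fin k, wt (e i) = 1 := by
    rw [← hw1]; exact Fintype.sum_equiv e _ _ fun i => rfl
  -- set up rational system over Option ι
  set W : Fin k → Option ι → ℚ := fun i o => o.elim 1 (fun j => ((b.repr (y (e i)) j : ℤ) : ℚ))
    with hW
  set c : Option ι → ℚ := fun o => o.elim 1 (fun j => ((b.repr x j : ℤ) : ℚ)) with hc
  obtain ⟨q, hq0, hq⟩ := rat_nonneg_of_real k W c (fun i => wt (e i)) (fun i => hw0 (e i))
    (by
      rintro (_ | j)
      · simpa [hW, hc] using hw1'
      · have := hcoordR j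
        push_cast
        simpa [hW, hc] using this)
  -- clear denominators
  set N : ℕ := ∏ i : Fin k, (q i).den with hN
  have hNpos : 0 < N := Finset.prod_pos fun i _ => (q i).pos
  have hqN : ∀ i, ∃ n : ℕ, (n : ℚ) = q i * N := by
    intro i
    obtain ⟨u, hu⟩ := Finset.dvd_prod_of_mem (fun i => (q i).den) (Finset.mem_univ i)
    refine ⟨((q i).num.toNat) * u, ?_⟩
    have hnum : (0:ℤ) ≤ (q i).num := Rat.num_nonneg.2 (hq0 i)
    have : q i * N = (q i).num * u := by
      rw [hN, hu]
      push_cast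
      rw [← mul_assoc, Rat.mul_den_eq_num]
    have h5 : (((q i).num.toNat * u : ℕ) : ℤ) = (q i).num * (u : ℤ) := by
      push_cast [Int.toNat_of_nonneg hnum]
      ring
    rw [this]
    exact_mod_cast h5
  choose n hn using hqN
  have hNsum : ∑ i, n i = N := by
    have : ∑ i, ((n i : ℚ)) = (N : ℚ) := by
      have h := hq none
      simp only [hc, hW, Option.elim, mul_one] at h
      calc ∑ i, ((n i : ℚ)) = ∑ i, q i * N := Finset.sum_congr rfl fun i _ => hn i
        _ = (∑ i, q i) * N := by rw [Finset.sum_mul]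
        _ = N := by rw [h, one_mul]
    exact_mod_cast this
  have hcoordZ : ∀ j : ι, (N : ℤ) * b.repr x j = ∑ i, (n i : ℤ) * b.repr (y (e i)) j := by
    intro j
    have h := hq (some j)
    simp only [hc, hW, Option.elim] at h
    have h2 : (∑ i, q i * ((b.repr (y (e i)) j : ℤ) : ℚ)) * N = ((b.repr x j : ℤ) : ℚ) * N := by
      rw [h]
    rw [Finset.sum_mul] at h2
    have h3 : ∑ i, ((n i : ℚ)) * ((b.repr (y (e i)) j : ℤ) : ℚ)
        = (N : ℚ) * ((b.repr x j : ℤ) : ℚ) := by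
      calc ∑ i, ((n i : ℚ)) * ((b.repr (y (e i)) j : ℤ) : ℚ)
          = ∑ i, q i * ((b.repr (y (e i)) j : ℤ) : ℚ) * N :=
            Finset.sum_congr rfl fun i _ => by rw [hn i]; ring
        _ = ((b.repr x j : ℤ) : ℚ) * N := h2
        _ = (N : ℚ) * ((b.repr x j : ℤ) : ℚ) := mul_comm _ _
    exact_mod_cast h3.symm
  refine ⟨N, hNpos, ?_⟩
  have hxN : N • x = ∑ i, n i • y (e i) := by
    apply b.ext_elem
    intro j
    have h := hcoordZ j
    simp only [map_sum, map_nsmul, Finsupp.smul_apply, Finsupp.coe_finset_sum,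
      Finset.sum_apply, nsmul_eq_mul]
    exact_mod_cast h
  rw [hxN, ← hNsum]
  exact sum_nsmul_mem_foldSum n _ fun i => hyK _

theorem span_inter_foldSum_eq_span_inter_convexHull (M : Type*) [AddCommGroup M]
    [Module.Free ℤ M] [Module.Finite ℤ M] (K : Set M) :
    { x : M | x ∈ Submodule.span ℤ K ∧ ∃ m : ℕ, 0 < m ∧ m • x ∈ foldSum m K }
      = { x : M | x ∈ Submodule.span ℤ K ∧
          ((1 : ℝ) ⊗ₜ[ℤ] x : ℝ ⊗[ℤ] M) ∈
            convexHull ℝ ((fun y : M => ((1 : ℝ) ⊗ₜ[ℤ] y : ℝ ⊗[ℤ] M)) '' K) } := by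
  ext x
  simp only [Set.mem_setOf_eq]
  refine and_congr_right fun _ => ⟨?_, ?_⟩
  · rintro ⟨m, hm, hfs⟩
    exact forward_aux M K x m hm hfs
  · exact backward_aux M K x
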